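/- Let n ≥ 2 be an integer and let r ∈ C²([0,∞)) satisfy r''(t)/(1 − r'(t)²) + ((n−1)/t)·r'(t) = 1 for all t ∈ (0,∞), with r(0) = 0, r'(0) = 0, 0 < r'(t) < 1 for all t ∈ (0,∞), and 0 < r''(t) ≤ 1 for all t ∈ [0,∞). Then r'(t) → 1 as t → +∞. -/

import Mathlib

open Set Filter Topology

theorem stmt_1 (n : ℕ) (hn : 2 ≤ n) (r r' r'' : ℝ → ℝ)
    (hr' : ∀ t ∈ Set.Ici (0:ℝ), HasDerivWithinAt r (r' t) (Set.Ici 0) t)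
    (hr'' : ∀ t ∈ Set.Ici (0:ℝ), HasDerivWithinAt r' (r'' t) (Set.Ici 0) t)
    (hcont : ContinuousOn r'' (Set.Ici 0))
    (heq : ∀ t ∈ Set.Ioi (0:ℝ),
      r'' t / (1 - (r' t) ^ 2) + ((n : ℝ) - 1) / t * r' t = 1)
    (h0 : r 0 = 0) (h0' : r' 0 = 0)
    (hlt : ∀ t ∈ Set.Ioi (0:ℝ), 0 < r' t ∧ r' t < 1)
    (hconv : ∀ t ∈ Set.Ici (0:ℝ), 0 < r'' t ∧ r'' t ≤ 1) :
    Filter.Tendsto r' Filter.atTop (nhds 1) := by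
  -- r' is nonneg and ≤ 1 on Ici 0
  have hge0 : ∀ t ∈ Set.Ici (0:ℝ), 0 ≤ r' t := by
    intro t ht
    rcases eq_or_lt_of_le (Set.mem_Ici.mp ht) with h | h
    · rw [← h]; simp [h0']
    · exact (hlt t h).1.le
  have hle1 : ∀ t ∈ Set.Ici (0:ℝ), r' t ≤ 1 := by
    intro t ht
    rcases eq_or_lt_of_le (Set.mem_Ici.mp ht) with h | h
    · rw [← h]; simp [h0']
    · exact (hlt t h).2.le
  -- r' is monotone on Ici 0
  have hmono : MonotoneOn r' (Set.Ici (0:ℝ)) := by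
    apply monotoneOn_of_hasDerivWithinAt_nonneg (convex_Ici 0)
      (fun t ht => (hr'' t ht).continuousWithinAt)
      (f' := r'')
    · intro x hx
      rw [interior_Ici] at hx
      exact ((hr'' x (Set.mem_Ici.mpr (le_of_lt (Set.mem_Ioi.mp hx)))).mono (by rw [interior_Ici]; exact Ioi_subset_Ici le_rfl))
    · intro x hx
      rw [interior_Ici] at hx
      exact (hconv x (Set.mem_Ici.mpr (le_of_lt (Set.mem_Ioi.mp hx)))).1.le
  -- auxiliary monotone extension
  set g : ℝ → ℝ := fun t => r' (max t 0) with hg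
  have hgmono : Monotone g := fun a b hab =>
    hmono (le_max_right a 0) (le_max_right b 0) (max_le_max hab le_rfl)
  have hgbdd : BddAbove (Set.range g) := by
    refine ⟨1, ?_⟩
    rintro x ⟨t, rfl⟩
    exact hle1 _ (le_max_right t 0)
  set L : ℝ := ⨆ t, g t with hL
  have htg : Filter.Tendsto g Filter.atTop (nhds L) := tendsto_atTop_ciSup hgmono hgbdd
  have heqv : g =ᶠ[Filter.atTop] r' := by
    filter_upwards [Filter.eventually_ge_atTop (0:ℝ)] with t ht
    simp [hg, max_eq_left ht]
  have htr : Filter.Tendsto r' Filter.atTop (nhds L) := htg.congr' heqv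
  have hLle : ∀ t ∈ Set.Ici (0:ℝ), r' t ≤ L := by
    intro t ht
    have : g t ≤ L := le_ciSup hgbdd t
    simpa [hg, max_eq_left (Set.mem_Ici.mp ht)] using this
  have hL0 : 0 ≤ L := by
    have h1 : g 0 ≤ L := le_ciSup hgbdd 0
    simpa [hg, h0'] using h1
  have hL1 : L ≤ 1 := ciSup_le fun t => hle1 _ (le_max_right t 0)
  -- claim L = 1
  rcases eq_or_lt_of_le hL1 with h | hLlt
  · rwa [h] at htr
  exfalso
  -- r'' t = (1 - (n-1)/t r')(1 - r'^2)
  have hode : ∀ t ∈ Set.Ioi (0:ℝ),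
      r'' t = (1 - ((n : ℝ) - 1) / t * r' t) * (1 - (r' t) ^ 2) := by
    intro t ht
    have h1 : (1 : ℝ) - (r' t) ^ 2 ≠ 0 := by
      have := (hlt t ht).2
      have h2 := (hlt t ht).1
      nlinarith
    have h2 : r'' t / (1 - (r' t) ^ 2) = 1 - ((n : ℝ) - 1) / t * r' t := by
      linarith [heq t ht]
    rw [div_eq_iff h1] at h2
    linarith [h2]
  set c : ℝ := (1 - L ^ 2) / 2 with hc
  have hcpos : 0 < c := by
    have : L ^ 2 < 1 := by nlinarith
    simp only [hc]; linarith
  set T : ℝ := max (2 * ((n : ℝ) - 1)) 1 with hT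
  have hT1 : (1:ℝ) ≤ T := le_max_right _ _
  have hT0 : (0:ℝ) < T := lt_of_lt_of_le one_pos hT1
  -- lower bound on r'' on Ici T
  have hr''ge : ∀ t ∈ Set.Ici T, c ≤ r'' t := by
    intro t ht
    have htpos : 0 < t := lt_of_lt_of_le hT0 ht
    have hio : t ∈ Set.Ioi (0:ℝ) := htpos
    have hr0 := (hlt t hio).1
    have hr1le : r' t ≤ L := hLle t htpos.le
    have hn1 : (0:ℝ) ≤ (n : ℝ) - 1 := by
      have : (1:ℝ) ≤ n := by exact_mod_cast le_trans (by norm_num) hn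
      linarith
    have hhalf : ((n : ℝ) - 1) / t * r' t ≤ 1 / 2 := by
      have h1 : ((n : ℝ) - 1) / t ≤ 1 / 2 := by
        rw [div_le_div_iff₀ htpos (by norm_num)]
        have : 2 * ((n : ℝ) - 1) ≤ T := le_max_left _ _
        linarith [le_trans this ht]
      have h2 : ((n : ℝ) - 1) / t * r' t ≤ ((n : ℝ) - 1) / t * 1 :=
        mul_le_mul_of_nonneg_left (hle1 t htpos.le) (div_nonneg hn1 htpos.le)
      linarith
    have hsq : 1 - L ^ 2 ≤ 1 - (r' t) ^ 2 := by nlinarith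
    rw [hode t hio]
    have hfac1 : (1:ℝ)/2 ≤ 1 - ((n : ℝ) - 1) / t * r' t := by linarith
    have hfac2 : (0:ℝ) ≤ 1 - L ^ 2 := by nlinarith
    calc c = (1/2) * (1 - L ^ 2) := by rw [hc]; ring
    _ ≤ (1 - ((n : ℝ) - 1) / t * r' t) * (1 - (r' t) ^ 2) := by
        apply mul_le_mul hfac1 hsq hfac2 (by linarith)
  -- the function r' t - c * t is monotone on Ici T
  have hIciT : Set.Ici T ⊆ Set.Ici (0:ℝ) := fun x hx => le_trans hT0.le hx
  have hmono2 : MonotoneOn (fun t => r' t - c * t) (Set.Ici T) := by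
    apply monotoneOn_of_hasDerivWithinAt_nonneg (convex_Ici T)
      (f' := fun t => r'' t - c)
    · exact fun t ht => ((hr'' t (hIciT ht)).mono hIciT).continuousWithinAt.sub
        (continuousWithinAt_const.mul continuousWithinAt_id)
    · intro x hx
      rw [interior_Ici] at hx
      have hx' : x ∈ Set.Ici T := Set.mem_Ici.mpr (le_of_lt (Set.mem_Ioi.mp hx))
      have hd : HasDerivWithinAt r' (r'' x) (Set.Ioi T) x :=
        (hr'' x (hIciT hx')).mono (fun y hy => le_trans hT0.le (le_of_lt hy))
      rw [interior_Ici]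
      exact (hd.sub ((hasDerivWithinAt_id x _).const_mul c)).congr_deriv (by ring)
    · intro x hx
      rw [interior_Ici] at hx
      have := hr''ge x (Set.mem_Ici.mpr (le_of_lt (Set.mem_Ioi.mp hx)))
      linarith
  -- contradiction: take t = T + 2/c
  have hle' : T ≤ T + 2 / c := le_add_of_nonneg_right (by positivity)
  have hkey := hmono2 Set.self_mem_Ici hle' hle'
  simp only at hkey
  have hc2 : c * (2 / c) = 2 := mul_div_cancel₀ _ (ne_of_gt hcpos)
  have hexp : c * (T + 2 / c) = c * T + c * (2 / c) := by ring
  have h1 : r' T + 2 ≤ r' (T + 2 / c) := by linarith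
  have h2 : r' (T + 2 / c) ≤ 1 := hle1 _ (le_trans hT0.le hle')
  have h3 : 0 ≤ r' T := hge0 T hT0.le
  linarith
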